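/- There exists a 5-uniform intersecting hypergraph with 17 vertices and exactly 13 edges whose covering number is 5. -/

import Mathlib

/-- A set of vertices `C` covers the hypergraph with edge set `E` if every edge
contains a vertex of `C`. -/
def IsCover {V : Type*} (E : Finset (Finset V)) (C : Finset V) : Prop :=
  ∀ e ∈ E, ∃ v ∈ e, v ∈ C

/-- The covering number: the minimum size of a cover. -/
noncomputable def coverNumber {V : Type*} (E : Finset (Finset V)) : ℕ :=
  sInf {n : ℕ | ∃ C : Finset V, C.card = n ∧ IsCover E C}

/-- The degree of a vertex: the number of edges containing it. -/
def degree {V : Type*} [DecidableEq V] (E : Finset (Finset V)) (v : V) : ℕ :=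
  (E.filter (fun e => v ∈ e)).card

def L17 : List (Finset (Fin 17)) :=
  [{4,7,8,11,14},{1,7,12,14,15},{4,6,9,10,15},{2,4,12,13,16},{1,3,6,11,16},
   {0,1,2,7,10},{0,3,10,11,12},{1,5,8,9,12},{3,5,10,13,14},{2,3,5,7,9},
   {0,6,9,13,14},{0,5,8,15,16},{2,8,11,13,15}]

def E17 : Finset (Finset (Fin 17)) := ⟨↑L17, by decide⟩

lemma mem_E17 {e : Finset (Fin 17)} : e ∈ E17 ↔ e ∈ L17 := by
  simp [E17, Finset.mem_mk]

def chk4 : Bool :=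
  (List.finRange 17).all fun a => (List.finRange 17).all fun b =>
    (List.finRange 17).all fun c => (List.finRange 17).all fun d =>
      if a < b ∧ b < c ∧ c < d then
        L17.any (fun e => (e ∩ {a,b,c,d}).card == 0)
      else true

set_option maxHeartbeats 4000000 in
lemma chk4_true : chk4 = true := by decide

lemma bad4 : ∀ a b c d : Fin 17, a < b → b < c → c < d →
    ∃ e ∈ E17, e ∩ {a,b,c,d} = ∅ := by
  intro a b c d hab hbc hcd
  have h := chk4_true
  unfold chk4 at h
  simp only [List.all_eq_true, List.mem_finRange, forall_const] at h
  have h2 := h a b c d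
  rw [if_pos ⟨hab, hbc, hcd⟩] at h2
  obtain ⟨e, he, hcard⟩ := List.any_eq_true.mp h2
  exact ⟨e, mem_E17.mpr he, Finset.card_eq_zero.mp (beq_iff_eq.mp hcard)⟩

lemma four_elems {D : Finset (Fin 17)} (h : D.card = 4) :
    ∃ a b c d : Fin 17, a < b ∧ b < c ∧ c < d ∧ D = {a,b,c,d} := by
  have hlen : (D.sort (· ≤ ·)).length = 4 := by rw [Finset.length_sort]; exact h
  have hs : List.Pairwise (· < ·) (D.sort (· ≤ ·)) := D.sortedLT_sort.pairwise
  have htf : (D.sort (· ≤ ·)).toFinset = D := Finset.sort_toFinset _ _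
  match hl : D.sort (· ≤ ·), hlen with
  | [a, b, c, d], _ =>
    rw [hl] at hs htf
    simp only [List.pairwise_cons, List.mem_cons, List.not_mem_nil, or_false,
      List.mem_singleton, List.Pairwise.nil, and_true] at hs
    refine ⟨a, b, c, d, hs.1 b (Or.inl rfl), hs.2.1 c (Or.inl rfl), hs.2.2.1 d rfl, ?_⟩
    rw [← htf]
    simp [List.toFinset_cons]

lemma key : ∀ C : Finset (Fin 17), IsCover E17 C → 5 ≤ C.card := by
  intro C hC
  by_contra hlt
  push_neg at hlt
  have hle : C.card ≤ 4 := Nat.lt_succ_iff.mp hlt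
  obtain ⟨D, hCD, hD4⟩ := Finset.exists_superset_card_eq hle (by simp)
  obtain ⟨a, b, c, d, hab, hbc, hcd, hDeq⟩ := four_elems hD4
  obtain ⟨e, heE, hdisj⟩ := bad4 a b c d hab hbc hcd
  obtain ⟨v, hve, hvC⟩ := hC e heE
  have hvD : v ∈ D := hCD hvC
  rw [hDeq] at hvD
  have : v ∈ e ∩ ({a,b,c,d} : Finset (Fin 17)) := Finset.mem_inter.mpr ⟨hve, hvD⟩
  rw [hdisj] at this
  exact absurd this (Finset.notMem_empty v)

lemma cover5 : IsCover E17 ({4,7,8,11,14} : Finset (Fin 17)) := by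
  have hb : (L17.all fun e => !((e ∩ ({4,7,8,11,14} : Finset (Fin 17))).card == 0)) = true := by
    decide
  intro e he
  rw [List.all_eq_true] at hb
  have h2 := hb e (mem_E17.mp he)
  rw [Bool.not_eq_true'] at h2
  have : (e ∩ ({4,7,8,11,14} : Finset (Fin 17))).card ≠ 0 := by
    intro h; rw [h] at h2; simp at h2
  obtain ⟨v, hv⟩ := Finset.card_ne_zero.mp this
  exact ⟨v, Finset.mem_of_mem_inter_left hv, Finset.mem_of_mem_inter_right hv⟩

theorem stmt17 : ∃ E : Finset (Finset (Fin 17)),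
    (∀ e ∈ E, e.card = 5) ∧
    (∀ e ∈ E, ∀ f ∈ E, e ≠ f → (e ∩ f).Nonempty) ∧
    E.card = 13 ∧
    (∀ v : Fin 17, ∃ e ∈ E, v ∈ e) ∧
    coverNumber E = 5 := by
  refine ⟨E17, ?_, ?_, ?_, ?_, ?_⟩
  · -- uniform
    have hb : (L17.all fun e => e.card == 5) = true := by decide
    intro e he
    rw [List.all_eq_true] at hb
    exact beq_iff_eq.mp (hb e (mem_E17.mp he))
  · -- intersecting
    have hb : (L17.all fun e => L17.all fun f => e == f || !((e ∩ f).card == 0)) = true := by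
      decide
    intro e he f hf hne
    rw [List.all_eq_true] at hb
    have h2 := (List.all_eq_true.mp (hb e (mem_E17.mp he))) f (mem_E17.mp hf)
    rw [Bool.or_eq_true] at h2
    rcases h2 with h2 | h2
    · exact absurd (by exact beq_iff_eq.mp h2) hne
    · rw [Bool.not_eq_true'] at h2
      refine Finset.card_pos.mp (Nat.pos_of_ne_zero ?_)
      intro h; rw [h] at h2; simp at h2
  · rfl
  · -- coverage
    have hb : ((List.finRange 17).all fun v => L17.any fun e => v ∈ e) = true := by decide
    intro v
    rw [List.all_eq_true] at hb
    obtain ⟨e, he, hv⟩ := List.any_eq_true.mp (hb v (List.mem_finRange v))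
    exact ⟨e, mem_E17.mpr he, of_decide_eq_true hv⟩
  · -- covering number
    have h5 : (5 : ℕ) ∈ {n : ℕ | ∃ C : Finset (Fin 17), C.card = n ∧ IsCover E17 C} :=
      ⟨{4,7,8,11,14}, by decide, cover5⟩
    refine le_antisymm (Nat.sInf_le h5) (le_csInf ⟨5, h5⟩ ?_)
    rintro n ⟨C, hcard, hcov⟩
    exact hcard ▸ key C hcov
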